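/- Let G be a nontrivial finite abelian group, F_q a finite field of characteristic p with p ∤ |G|, C = F_q G · e a minimal ideal (e a primitive idempotent), and w ∈ G of order exp(G). Then |G| / t_w ≤ d(C), where d(C) is the minimum Hamming weight of nonzero elements of C and t_w is the least positive integer a with w^(q^a)=w. -/

import Mathlib

open MonoidAlgebra Polynomial

set_option maxHeartbeats 2000000 in
theorem minimal_code_min_distance_bound
    (p : ℕ) [Fact p.Prime]
    (F : Type*) [Field F] [Fintype F] [CharP F p]
    (q : ℕ) (hq : Fintype.card F = q)
    (G : Type*) [CommGroup G] [Fintype G] [Nontrivial G]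
    (hG : ¬ p ∣ Fintype.card G)
    (e : MonoidAlgebra F G) (he : IsIdempotentElem e) (hne : e ≠ 0)
    (hprim : ∀ f g : MonoidAlgebra F G, IsIdempotentElem f → IsIdempotentElem g →
      f * g = 0 → g * f = 0 → e = f + g → f = 0 ∨ g = 0)
    (C : Ideal (MonoidAlgebra F G)) (hC : C = Ideal.span {e})
    (hmin : IsAtom C)
    (w : G) (hw : orderOf w = Monoid.exponent G)
    (tw : ℕ) (htw : IsLeast {a : ℕ | 0 < a ∧ w ^ q ^ a = w} tw) :
    ∀ c ∈ C, c ≠ 0 → (Fintype.card G : ℝ) / (tw : ℝ) ≤ (c.coeff.support.card : ℝ) := by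
  classical
  obtain ⟨⟨htw0, hwQ⟩, -⟩ := htw
  have hq2 : 1 < q := hq ▸ Fintype.one_lt_card
  set Q : ℕ := q ^ tw with hQdef
  have hQ2 : 1 < Q := Nat.one_lt_pow htw0.ne' hq2
  -- every group element satisfies g ^ Q = g
  have hgQ : ∀ g : G, g ^ Q = g := by
    have hwd : orderOf w ∣ Q - 1 := by
      apply orderOf_dvd_of_pow_eq_one
      have h1 : w ^ (Q - 1) * w = 1 * w := by
        rw [one_mul, ← pow_succ, Nat.sub_add_cancel (by omega)]
        exact hwQ
      exact mul_right_cancel h1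
    intro g
    have hgd : orderOf g ∣ Q - 1 := dvd_trans (Monoid.order_dvd_exponent g) (hw ▸ hwd)
    have h1 : g ^ (Q - 1) = 1 := orderOf_dvd_iff_pow_eq_one.mp hgd
    calc g ^ Q = g ^ (Q - 1) * g := by rw [← pow_succ, Nat.sub_add_cancel (by omega)]
    _ = g := by rw [h1, one_mul]
  -- every field element satisfies a ^ Q = a
  have haQ : ∀ a : F, a ^ Q = a := by
    intro a
    have := FiniteField.pow_card_pow tw a
    rwa [hq] at this
  -- every element of the group algebra satisfies x ^ Q = x
  have hchar : CharP (MonoidAlgebra F G) p := charP_of_injective_algebraMap (algebraMap F (MonoidAlgebra F G)).injective p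
  have hxQ : ∀ x : MonoidAlgebra F G, x ^ Q = x := by
    intro x
    obtain ⟨n, hnp, hcard⟩ := FiniteField.card F p
    have hQp : Q = p ^ ((n : ℕ) * tw) := by
      rw [hQdef, ← hq, hcard, pow_mul]
    conv_lhs => rw [← MonoidAlgebra.sum_single x]
    rw [Finsupp.sum, hQp, sum_pow_char_pow]
    conv_rhs => rw [← MonoidAlgebra.sum_single x, Finsupp.sum]
    refine Finset.sum_congr rfl fun g hg => ?_
    rw [MonoidAlgebra.single_pow, ← hQp, hgQ, haQ]
  -- elements of C are fixed by multiplication with e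
  have hce : ∀ x ∈ C, x * e = x := by
    intro x hx
    rw [hC, Ideal.mem_span_singleton] at hx
    obtain ⟨s, rfl⟩ := hx
    calc e * s * e = e * e * s := by ring
    _ = e * s := by rw [he]
  -- C has no zero divisors
  have hCzero : ∀ a ∈ C, ∀ b ∈ C, a * b = 0 → a = 0 ∨ b = 0 := by
    intro a ha b hb hab
    by_cases ha0 : a = 0
    · exact Or.inl ha0
    right
    have hspan : Ideal.span {a} = C := by
      rcases lt_or_eq_of_le ((Ideal.span_le).2 (Set.singleton_subset_iff.2 ha)) with h | h
      · exfalso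
        have hb0 : Ideal.span {a} = (⊥ : Ideal (MonoidAlgebra F G)) := hmin.2 _ h
        have : a ∈ (⊥ : Ideal (MonoidAlgebra F G)) := hb0 ▸ Ideal.mem_span_singleton_self a
        exact ha0 (Ideal.mem_bot.mp this)
      · exact h
    have hea : a ∣ e := Ideal.mem_span_singleton.mp (hspan ▸ (hC ▸ Ideal.mem_span_singleton_self e))
    obtain ⟨r, hr⟩ := hea
    have hbe : b * e = 0 := by
      rw [hr]
      calc b * (a * r) = a * b * r := by ring
      _ = 0 := by rw [hab, zero_mul]
    rw [← hce b hb, hbe]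
  -- the complementary ideal
  set I : Ideal (MonoidAlgebra F G) := Ideal.span {1 - e} with hI
  have hIe : ∀ x : MonoidAlgebra F G, x ∈ I ↔ x * e = 0 := by
    intro x
    constructor
    · intro hx
      rw [hI, Ideal.mem_span_singleton] at hx
      obtain ⟨t, rfl⟩ := hx
      calc (1 - e) * t * e = t * (e - e * e) := by ring
      _ = 0 := by rw [he]; ring
    · intro hx
      rw [hI, Ideal.mem_span_singleton]
      exact ⟨x, by rw [sub_mul, one_mul, mul_comm x e] at *; rw [hx, sub_zero]⟩
  have hItop : I ≠ ⊤ := by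
    intro h
    have : (1 : MonoidAlgebra F G) ∈ I := h ▸ Submodule.mem_top
    rw [hIe, one_mul] at this
    exact hne this
  have hmemC : ∀ x : MonoidAlgebra F G, x * e ∈ C := by
    intro x
    rw [hC, Ideal.mem_span_singleton]
    exact ⟨x, mul_comm x e⟩
  haveI hIprime : I.IsPrime := by
    constructor
    · exact hItop
    · intro x y hxy
      rw [hIe] at hxy
      have : (x * e) * (y * e) = 0 := by
        calc (x * e) * (y * e) = (x * y * e) * e := by ring
        _ = 0 := by rw [hxy, zero_mul]
      rcases hCzero _ (hmemC x) _ (hmemC y) this with h | h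
      · exact Or.inl ((hIe x).mpr h)
      · exact Or.inr ((hIe y).mpr h)
  -- the quotient ring is a finite integral domain in which every element is a root of X^Q - X
  haveI hRfin : Fintype (MonoidAlgebra F G) := Fintype.ofEquiv _ MonoidAlgebra.coeffEquiv.symm
  haveI : Finite (MonoidAlgebra F G ⧸ I) :=
    Finite.of_surjective _ (Ideal.Quotient.mk_surjective (I := I))
  haveI : Fintype (MonoidAlgebra F G ⧸ I) := Fintype.ofFinite _
  haveI : Nontrivial (MonoidAlgebra F G ⧸ I) := Ideal.Quotient.nontrivial_iff.mpr hItop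
  have hyQ : ∀ y : MonoidAlgebra F G ⧸ I, y ^ Q = y := by
    intro y
    obtain ⟨x, rfl⟩ := Ideal.Quotient.mk_surjective y
    rw [← map_pow, hxQ]
  have hfne : (Polynomial.X ^ Q - Polynomial.X : Polynomial (MonoidAlgebra F G ⧸ I)) ≠ 0 := by
    apply Polynomial.ne_zero_of_natDegree_gt (n := 0)
    have h1 : (Polynomial.X : Polynomial (MonoidAlgebra F G ⧸ I)).degree
        < (Polynomial.X ^ Q : Polynomial (MonoidAlgebra F G ⧸ I)).degree := by
      rw [Polynomial.degree_X_pow, Polynomial.degree_X]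
      exact_mod_cast hQ2
    rw [Polynomial.natDegree_eq_of_degree_eq (Polynomial.degree_sub_eq_left_of_degree_lt h1),
      Polynomial.natDegree_X_pow]
    omega
  have hcardQ : Fintype.card (MonoidAlgebra F G ⧸ I) ≤ Q := by
    have hsub : (Finset.univ : Finset (MonoidAlgebra F G ⧸ I)) ⊆
        ((Polynomial.X ^ Q - Polynomial.X :
          Polynomial (MonoidAlgebra F G ⧸ I)).roots).toFinset := by
      intro y _
      rw [Multiset.mem_toFinset, Polynomial.mem_roots hfne]
      simp [Polynomial.IsRoot, hyQ y]
    calc Fintype.card (MonoidAlgebra F G ⧸ I) = (Finset.univ : Finset (MonoidAlgebra F G ⧸ I)).card := rfl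
    _ ≤ _ := Finset.card_le_card hsub
    _ ≤ Multiset.card ((Polynomial.X ^ Q - Polynomial.X :
          Polynomial (MonoidAlgebra F G ⧸ I)).roots) := Multiset.toFinset_card_le _
    _ ≤ (Polynomial.X ^ Q - Polynomial.X :
          Polynomial (MonoidAlgebra F G ⧸ I)).natDegree := Polynomial.card_roots' _
    _ ≤ Q := by
      have h1 : (Polynomial.X : Polynomial (MonoidAlgebra F G ⧸ I)).degree
          < (Polynomial.X ^ Q : Polynomial (MonoidAlgebra F G ⧸ I)).degree := by
        rw [Polynomial.degree_X_pow, Polynomial.degree_X]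
        exact_mod_cast hQ2
      rw [Polynomial.natDegree_eq_of_degree_eq (Polynomial.degree_sub_eq_left_of_degree_lt h1),
        Polynomial.natDegree_X_pow]
  have hfinrank : Module.finrank F (MonoidAlgebra F G ⧸ I) ≤ tw := by
    have hc : Fintype.card (MonoidAlgebra F G ⧸ I)
        = q ^ Module.finrank F (MonoidAlgebra F G ⧸ I) := by
      rw [← hq]; exact Module.card_eq_pow_finrank
    rw [hc, hQdef] at hcardQ
    exact (Nat.pow_le_pow_iff_right hq2).mp hcardQ
  -- the translate argument
  intro c hc hc0
  set t : G → MonoidAlgebra F G := fun g => MonoidAlgebra.single g (1 : F) * c with ht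
  have htC : ∀ g, t g ∈ C := fun g => C.mul_mem_left _ hc
  have hsupp : ∀ g, (t g).coeff.support = c.coeff.support.map (mulLeftEmbedding g) := fun g =>
    MonoidAlgebra.support_coeff_single_mul c 1 (fun y => by simp) g
  obtain ⟨b, hbS, hspan, hbind⟩ := exists_linearIndependent F (Set.range t)
  have hbfin : b.Finite := (Set.finite_range t).subset hbS
  haveI := hbfin.fintype
  have hbC : ∀ x ∈ b, x ∈ C := fun x hx => by
    obtain ⟨g, rfl⟩ := hbS hx; exact htC g
  set φ : MonoidAlgebra F G →ₗ[F] MonoidAlgebra F G ⧸ I :=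
    (Ideal.Quotient.mkₐ F I).toLinearMap with hφ
  have hdisj : Disjoint (Submodule.span F (Set.range ((↑) : b → MonoidAlgebra F G)))
      (LinearMap.ker φ) := by
    rw [Subtype.range_coe, Submodule.disjoint_def]
    intro x hx1 hx2
    have hxC : x ∈ C := by
      have hle : Submodule.span F b ≤ Submodule.restrictScalars F C :=
        Submodule.span_le.2 (fun y hy => hbC y hy)
      exact hle hx1
    have hxI : x ∈ I := by
      rw [LinearMap.mem_ker] at hx2
      exact (Ideal.Quotient.eq_zero_iff_mem).mp hx2
    rw [← hce x hxC, (hIe x).mp hxI]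
  haveI : Module.Finite F (MonoidAlgebra F G ⧸ I) := (Module.finite_iff_finite (R := F)).mpr inferInstance
  have hcardb : Fintype.card b ≤ tw := by
    have := (hbind.map hdisj).fintype_card_le_finrank
    exact this.trans hfinrank
  set U : Finset G := hbfin.toFinset.biUnion (fun v => v.coeff.support) with hU
  have hcover : ∀ g : G, (t g).coeff.support ⊆ U := by
    intro g
    have hmem : t g ∈ Submodule.span F b := by
      rw [hspan]
      exact Submodule.subset_span ⟨g, rfl⟩
    refine Submodule.span_induction (p := fun x _ => x.coeff.support ⊆ U)
      (fun x hx => Finset.subset_biUnion_of_mem (fun v => v.coeff.support) (hbfin.mem_toFinset.2 hx))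
      (by simp)
      (fun x y _ _ hx hy => (Finsupp.support_add).trans (Finset.union_subset hx hy))
      (fun a x _ hx => (Finsupp.support_smul).trans hx) hmem
  have hGsub : (Finset.univ : Finset G) ⊆ U := by
    intro a _
    obtain ⟨h, hh⟩ := Finset.nonempty_iff_ne_empty.2
      (fun hemp => hc0 (MonoidAlgebra.coeff_eq_zero.mp (Finsupp.support_eq_empty.mp hemp)))
    apply hcover (a * h⁻¹)
    rw [hsupp, Finset.mem_map]
    exact ⟨h, hh, by simp [mulLeftEmbedding_apply]⟩
  have hmain : Fintype.card G ≤ tw * c.coeff.support.card := by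
    calc Fintype.card G = (Finset.univ : Finset G).card := (Finset.card_univ).symm
    _ ≤ U.card := Finset.card_le_card hGsub
    _ ≤ ∑ v ∈ hbfin.toFinset, v.coeff.support.card := Finset.card_biUnion_le
    _ = ∑ _v ∈ hbfin.toFinset, c.coeff.support.card := by
      refine Finset.sum_congr rfl (fun v hv => ?_)
      obtain ⟨g, rfl⟩ := hbS (hbfin.mem_toFinset.1 hv)
      rw [hsupp, Finset.card_map]
    _ = hbfin.toFinset.card * c.coeff.support.card := by rw [Finset.sum_const, smul_eq_mul]
    _ = Fintype.card b * c.coeff.support.card := by rw [Set.Finite.card_toFinset]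
    _ ≤ tw * c.coeff.support.card := Nat.mul_le_mul_right _ hcardb
  rw [div_le_iff₀ (by exact_mod_cast htw0)]
  calc (Fintype.card G : ℝ) ≤ (tw * c.coeff.support.card : ℕ) := by exact_mod_cast hmain
  _ = (c.coeff.support.card : ℝ) * (tw : ℝ) := by push_cast; ring
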